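/- Let o ∈ [0,1]^d, z its rounding, p ≥ 1, σ a certainty-sorting permutation, and α ≥ 0. If t ∈ {1,…,d} satisfies ‖o − flip(z,{σ(1),…,σ(t)})‖_p > α, then the prediction set {Y ∈ {0,1}^d : ‖o − Y‖_p ≤ α} has cardinality at most Σ_{j=0}^{t−1} C(d, j), since it is contained in the Hamming ball of radius t − 1 around z. -/

import Mathlib

noncomputable def lpN {d : ℕ} (p : ℝ) (v : Fin d → ℝ) : ℝ :=
  (∑ k, |v k| ^ p) ^ (1 / p)

noncomputable def rnd {d : ℕ} (o : Fin d → ℝ) : Fin d → ℝ :=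
  fun k => if (0.5 : ℝ) ≤ o k then 1 else 0

noncomputable def flipSet {d : ℕ} (z : Fin d → ℝ) (S : Finset (Fin d)) : Fin d → ℝ :=
  fun k => if k ∈ S then 1 - z k else z k

def firstIdx {d : ℕ} (σ : Equiv.Perm (Fin d)) (ν : ℕ) : Finset (Fin d) :=
  (Finset.univ.filter (fun i : Fin d => (i : ℕ) < ν)).image σ

/-- real-valued binary vector associated with a boolean vector -/
noncomputable def toReal {d : ℕ} (b : Fin d → Bool) : Fin d → ℝ :=
  fun k => if b k then 1 else 0

noncomputable def hamming {d : ℕ} (Y z : Fin d → ℝ) : ℕ :=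
  (Finset.univ.filter (fun k : Fin d => Y k ≠ z k)).card

lemma mem_firstIdx {d : ℕ} (σ : Equiv.Perm (Fin d)) (ν : ℕ) (a : Fin d) :
    a ∈ firstIdx σ ν ↔ ((σ.symm a : Fin d) : ℕ) < ν := by
  simp only [firstIdx, Finset.mem_image, Finset.mem_filter, Finset.mem_univ, true_and]
  constructor
  · rintro ⟨i, hi, rfl⟩; simpa using hi
  · intro h; exact ⟨σ.symm a, h, σ.apply_symm_apply a⟩

lemma card_firstIdx {d : ℕ} (σ : Equiv.Perm (Fin d)) (ν : ℕ) (hν : ν ≤ d) :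
    (firstIdx σ ν).card = ν := by
  rw [firstIdx, Finset.card_image_of_injective _ σ.injective]
  rw [Finset.card_filter]
  rw [Fin.sum_univ_eq_sum_range (fun i => if i < ν then 1 else 0)]
  rw [← Finset.card_filter]
  have : (Finset.range d).filter (fun i => i < ν) = Finset.range ν := by
    ext i; simp only [Finset.mem_filter, Finset.mem_range]; omega
  rw [this, Finset.card_range]

-- base values
lemma near_far {d : ℕ} (o : Fin d → ℝ) (ho : ∀ k, o k ∈ Set.Icc (0:ℝ) 1) (k : Fin d) :
    |o k - rnd o k| = 0.5 - |o k - 0.5| ∧ |o k - (1 - rnd o k)| = 0.5 + |o k - 0.5| := by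
  obtain ⟨h0, h1⟩ := ho k
  by_cases h : (0.5:ℝ) ≤ o k
  · simp only [rnd, if_pos h]
    rw [abs_of_nonpos (by linarith), abs_of_nonneg (by linarith)]
    constructor <;> [skip; rw [abs_of_nonneg (by linarith)]] <;> ring
  · simp only [rnd, if_neg h]
    push_neg at h
    rw [abs_of_nonneg (by linarith), abs_of_nonpos (by linarith)]
    constructor <;> [skip; rw [abs_of_nonpos (by linarith)]] <;> ring

lemma aux_sum_le {d : ℕ} (g : Fin d → ℝ) (hg : ∀ k, 0 ≤ g k)
    (S T : Finset (Fin d)) (hcard : T.card ≤ S.card)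
    (hmin : ∀ a ∉ T, ∀ b ∈ T, g b ≤ g a) :
    ∑ k ∈ T, g k ≤ ∑ k ∈ S, g k := by
  have hc1 := Finset.card_sdiff_add_card_inter T S
  have hc2 := Finset.card_sdiff_add_card_inter S T
  rw [Finset.inter_comm] at hc2
  have hcd : (T \ S).card ≤ (S \ T).card := by omega
  have key : ∑ k ∈ T \ S, g k ≤ ∑ k ∈ S \ T, g k := by
    rcases Finset.eq_empty_or_nonempty (S \ T) with he | hne
    · have : (T \ S).card = 0 := by rw [he] at hcd; simpa using hcd
      rw [Finset.card_eq_zero] at this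
      simp [this, he]
    · obtain ⟨a, haS, hamin⟩ := Finset.exists_min_image (S \ T) g hne
      have haT : a ∉ T := (Finset.mem_sdiff.mp haS).2
      calc ∑ k ∈ T \ S, g k ≤ (T \ S).card • g a := by
            apply Finset.sum_le_card_nsmul
            intro b hb
            exact hmin a haT b (Finset.mem_sdiff.mp hb).1
        _ ≤ (S \ T).card • g a := by
            simp only [nsmul_eq_mul]
            exact mul_le_mul_of_nonneg_right (by exact_mod_cast hcd) (hg a)
        _ ≤ ∑ k ∈ S \ T, g k := Finset.card_nsmul_le_sum _ _ _ hamin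
  calc ∑ k ∈ T, g k = ∑ k ∈ T ∩ S, g k + ∑ k ∈ T \ S, g k :=
        (Finset.sum_inter_add_sum_sdiff T S g).symm
    _ ≤ ∑ k ∈ S ∩ T, g k + ∑ k ∈ S \ T, g k := by
        rw [Finset.inter_comm]; exact add_le_add_right key _
    _ = ∑ k ∈ S, g k := Finset.sum_inter_add_sum_sdiff S T g

lemma lp_flip_mono {d : ℕ} (p : ℝ) (hp : 1 ≤ p)
    (o : Fin d → ℝ) (ho : ∀ k, o k ∈ Set.Icc (0 : ℝ) 1)
    (σ : Equiv.Perm (Fin d))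
    (hσ : ∀ i j : Fin d, i ≤ j → |o (σ i) - 0.5| ≤ |o (σ j) - 0.5|)
    (t : ℕ) (htd : t ≤ d) (S : Finset (Fin d)) (hS : t ≤ S.card) :
    lpN p (fun k => o k - flipSet (rnd o) (firstIdx σ t) k) ≤
      lpN p (fun k => o k - flipSet (rnd o) S k) := by
  have hp0 : (0:ℝ) ≤ p := by linarith
  set u : Fin d → ℝ := fun k => |o k - 0.5| with hu
  have hu0 : ∀ k, 0 ≤ u k := fun k => abs_nonneg _
  have huh : ∀ k, u k ≤ 0.5 := by
    intro k; obtain ⟨h0, h1⟩ := ho k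
    exact abs_le.mpr ⟨by linarith, by linarith⟩
  set N : Fin d → ℝ := fun k => |o k - rnd o k| ^ p with hN
  set F : Fin d → ℝ := fun k => |o k - (1 - rnd o k)| ^ p with hF
  have hNval : ∀ k, N k = (0.5 - u k) ^ p := fun k => by
    rw [hN]; simp only []; rw [(near_far o ho k).1]
  have hFval : ∀ k, F k = (0.5 + u k) ^ p := fun k => by
    rw [hF]; simp only []; rw [(near_far o ho k).2]
  set g : Fin d → ℝ := fun k => F k - N k with hg
  have hg0 : ∀ k, 0 ≤ g k := by
    intro k
    have : N k ≤ F k := by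
      rw [hNval, hFval]
      exact Real.rpow_le_rpow (by linarith [huh k]) (by linarith [hu0 k]) hp0
    simp only [hg]; linarith
  have gmono : ∀ a b, u b ≤ u a → g b ≤ g a := by
    intro a b hab
    have h1 : F b ≤ F a := by
      rw [hFval, hFval]
      exact Real.rpow_le_rpow (by linarith [hu0 b]) (by linarith) hp0
    have h2 : N a ≤ N b := by
      rw [hNval, hNval]
      exact Real.rpow_le_rpow (by linarith [huh a]) (by linarith) hp0
    simp only [hg]; linarith
  have sumflip : ∀ A : Finset (Fin d),
      ∑ k, |o k - flipSet (rnd o) A k| ^ p = ∑ k, N k + ∑ k ∈ A, g k := by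
    intro A
    have : ∀ k : Fin d, |o k - flipSet (rnd o) A k| ^ p
        = N k + (if k ∈ A then g k else 0) := by
      intro k
      by_cases h : k ∈ A
      · simp only [flipSet, if_pos h, hg, hF, hN]
        ring
      · simp only [flipSet, if_neg h, hN]; ring
    rw [Finset.sum_congr rfl (fun k _ => this k), Finset.sum_add_distrib]
    congr 1
    rw [Finset.sum_ite_mem, Finset.univ_inter]
  have hmin : ∀ a ∉ firstIdx σ t, ∀ b ∈ firstIdx σ t, g b ≤ g a := by
    intro a ha b hb
    rw [mem_firstIdx] at ha hb
    push_neg at ha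
    have hij : σ.symm b ≤ σ.symm a := by
      rw [Fin.le_def]; omega
    have := hσ (σ.symm b) (σ.symm a) hij
    simp only [Equiv.apply_symm_apply] at this
    exact gmono a b this
  have hsum : ∑ k, |o k - flipSet (rnd o) (firstIdx σ t) k| ^ p ≤
      ∑ k, |o k - flipSet (rnd o) S k| ^ p := by
    rw [sumflip, sumflip]
    apply add_le_add_right
    exact aux_sum_le g hg0 S (firstIdx σ t) (by rw [card_firstIdx σ t htd]; exact hS) hmin
  unfold lpN
  apply Real.rpow_le_rpow _ hsum (by positivity)
  exact Finset.sum_nonneg fun k _ => Real.rpow_nonneg (abs_nonneg _) p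

lemma card_hamming_le {d : ℕ} (o : Fin d → ℝ) (t : ℕ) (ht1 : 1 ≤ t) :
    (Finset.univ.filter (fun b : Fin d → Bool =>
      hamming (toReal b) (rnd o) ≤ t - 1)).card ≤
      ∑ j ∈ Finset.range t, d.choose j := by
  classical
  set zb : Fin d → Bool := fun k => decide ((0.5:ℝ) ≤ o k) with hzb
  set φ : (Fin d → Bool) → Finset (Fin d) :=
    fun b => Finset.univ.filter (fun k => b k ≠ zb k) with hφ
  have hiff : ∀ (b : Fin d → Bool) (k : Fin d),
      toReal b k ≠ rnd o k ↔ b k ≠ zb k := by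
    intro b k
    by_cases h : (0.5:ℝ) ≤ o k <;> cases hb : b k <;>
      simp [toReal, rnd, hzb, h, hb] <;> norm_num
  have hham : ∀ b : Fin d → Bool, hamming (toReal b) (rnd o) = (φ b).card := by
    intro b
    unfold hamming
    congr 1
    apply Finset.filter_congr
    intro k _
    simp only [hiff b k]
  have hinj : Function.Injective φ := by
    intro b b' h
    funext k
    have := Finset.ext_iff.mp h k
    simp only [hφ, Finset.mem_filter, Finset.mem_univ, true_and] at this
    revert this
    cases b k <;> cases b' k <;> cases zb k <;> simp
  set B : Finset (Finset (Fin d)) :=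
    (Finset.range t).biUnion (fun j => Finset.powersetCard j Finset.univ) with hB
  have hcardB : B.card = ∑ j ∈ Finset.range t, d.choose j := by
    rw [hB, Finset.card_biUnion]
    · apply Finset.sum_congr rfl
      intro j _
      rw [Finset.card_powersetCard, Finset.card_univ, Fintype.card_fin]
    · intro i _ j _ hij
      rw [Function.onFun, Finset.disjoint_left]
      intro A hAi hAj
      rw [Finset.mem_powersetCard] at hAi hAj
      exact hij (hAi.2 ▸ hAj.2)
  rw [← hcardB]
  apply Finset.card_le_card_of_injOn φ _ hinj.injOn
  intro b hb
  rw [Finset.mem_coe, Finset.mem_filter] at hb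
  have hcard : (φ b).card ≤ t - 1 := by rw [← hham]; exact hb.2
  rw [Finset.mem_coe, hB, Finset.mem_biUnion]
  exact ⟨(φ b).card, Finset.mem_range.mpr (by omega),
    Finset.mem_powersetCard.mpr ⟨Finset.subset_univ _, rfl⟩⟩

theorem stmt14 {d : ℕ} (hd : 1 ≤ d) (p : ℝ) (hp : 1 ≤ p)
    (o : Fin d → ℝ) (ho : ∀ k, o k ∈ Set.Icc (0 : ℝ) 1)
    (σ : Equiv.Perm (Fin d))
    (hσ : ∀ i j : Fin d, i ≤ j → |o (σ i) - 0.5| ≤ |o (σ j) - 0.5|)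
    (α : ℝ) (hα : 0 ≤ α) (t : ℕ) (ht1 : 1 ≤ t) (htd : t ≤ d)
    (ht : α < lpN p (fun k => o k - flipSet (rnd o) (firstIdx σ t) k)) :
    (Finset.univ.filter (fun b : Fin d → Bool =>
        lpN p (fun k => o k - toReal b k) ≤ α)) ⊆
      (Finset.univ.filter (fun b : Fin d → Bool =>
        hamming (toReal b) (rnd o) ≤ t - 1)) ∧
    (Finset.univ.filter (fun b : Fin d → Bool =>
        lpN p (fun k => o k - toReal b k) ≤ α)).card ≤
      ∑ j ∈ Finset.range t, d.choose j := by
  have hsub : (Finset.univ.filter (fun b : Fin d → Bool =>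
      lpN p (fun k => o k - toReal b k) ≤ α)) ⊆
      (Finset.univ.filter (fun b : Fin d → Bool =>
        hamming (toReal b) (rnd o) ≤ t - 1)) := by
    intro b hb
    rw [Finset.mem_filter] at hb ⊢
    refine ⟨Finset.mem_univ _, ?_⟩
    by_contra hcon
    push_neg at hcon
    set Sb : Finset (Fin d) :=
      Finset.univ.filter (fun k => toReal b k ≠ rnd o k) with hSb
    have hcard : t ≤ Sb.card := by
      have : hamming (toReal b) (rnd o) = Sb.card := rfl
      omega
    have heq : toReal b = flipSet (rnd o) Sb := by
      funext k
      by_cases h : toReal b k = rnd o k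
      · have hk : k ∉ Sb := by simp [hSb, h]
        simp [flipSet, hk, h]
      · have hk : k ∈ Sb := by simp [hSb, h]
        simp only [flipSet, if_pos hk]
        by_cases h5 : (0.5:ℝ) ≤ o k <;> cases hbk : b k <;>
          simp [toReal, rnd, h5, hbk] at h ⊢ <;> norm_num
    have := lp_flip_mono p hp o ho σ hσ t htd Sb hcard
    rw [← heq] at this
    linarith [hb.2]
  exact ⟨hsub, le_trans (Finset.card_le_card hsub) (card_hamming_le o t ht1)⟩
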